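/- For every global run T of an L-DPN that uses locks in a nested style, and for every node v of T, the acquisition structure as=(R,RH,U,AH,A,X) of the subtree of T rooted at v is consistent: the release graph RH and the acquisition graph AH are acyclic, and (X∖R)∩(U∪A)=∅ (an initially-held lock that is never released in the subtree is neither used nor finally acquired in it). -/

import Mathlib

/-!
Common formalization infrastructure for
"Single-indexed LTL model checking for Dynamic Pushdown Networks with locks".
-/

namespace DPNFormal

/-- Actions of an L-DPN: internal action, lock acquisition, lock release. -/
inductive Act (L : Type) : Type
  | tau : Act L
  | acq : L → Act L
  | rel : L → Act L

/-- Transition rules of a DPDS: `simple a p γ p' w` is `pγ ↪ᵃ p'w`,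
`spawn a p γ p' w p₂ w₂` is `pγ ↪ᵃ p'w ▷ p₂w₂`. -/
inductive Rule (P Γ L : Type) : Type
  | simple (a : Act L) (p : P) (γ : Γ) (p' : P) (w : List Γ) : Rule P Γ L
  | spawn (a : Act L) (p : P) (γ : Γ) (p' : P) (w : List Γ) (p₂ : P) (w₂ : List Γ) : Rule P Γ L

/-- A local configuration: control state, stack content, set of held locks. -/
abbrev Conf (P Γ L : Type) := P × List Γ × Set L

/-- A Dynamic Pushdown Network with Locks (L-DPN): `n` DPDSs, each with its
set of control states, its stack alphabet and its set of rules.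
A (lock-free) DPN is the special case `L = Empty` (so all actions are `τ`). -/
structure LDPN (n : ℕ) (P Γ L : Type) where
  states : Fin n → Set P
  alph : Fin n → Set Γ
  rules : Fin n → Set (Rule P Γ L)

/-- Well-formedness of a rule of the `i`-th DPDS: the control locations belong to
`Pᵢ`, the stack symbols to `Γᵢ`, and a spawned configuration belongs to some `Pⱼ × Γⱼ*`. -/
def RuleOk {n P Γ L} (M : LDPN n P Γ L) (i : Fin n) : Rule P Γ L → Prop
  | .simple _ p γ p' w => p ∈ M.states i ∧ p' ∈ M.states i ∧ γ ∈ M.alph i ∧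
      ∀ x ∈ w, x ∈ M.alph i
  | .spawn _ p γ p' w p₂ w₂ => p ∈ M.states i ∧ p' ∈ M.states i ∧ γ ∈ M.alph i ∧
      (∀ x ∈ w, x ∈ M.alph i) ∧ ∃ j, p₂ ∈ M.states j ∧ ∀ x ∈ w₂, x ∈ M.alph j

/-- Well-formedness of an L-DPN: all components are finite, the control-state sets
are pairwise disjoint, and all rules are well-formed. -/
structure LDPN.WF {n P Γ L} (M : LDPN n P Γ L) : Prop where
  states_fin : ∀ i, (M.states i).Finite
  alph_fin : ∀ i, (M.alph i).Finite
  rules_fin : ∀ i, (M.rules i).Finite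
  disj : ∀ i j, i ≠ j → Disjoint (M.states i) (M.states j)
  rules_ok : ∀ i, ∀ ru ∈ M.rules i, RuleOk M i ru

/-- The set `D_I` of Dynamically Created Local Initial Configurations (DCLICs). -/
def LDPN.DCLICs {n P Γ L} (M : LDPN n P Γ L) : Set (Conf P Γ L) :=
  {c | ∃ i a p γ p' w p₂ w₂, Rule.spawn a p γ p' w p₂ w₂ ∈ M.rules i ∧
        c = (p₂, w₂, (∅ : Set L))}

/-! ### Global runs as (growing) binary trees -/

/-- Finite binary trees whose nodes are labelled by local configurations;
a node has either no child (a leaf), only a right child, or both children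
(left child = newly spawned instance). -/
inductive GTree (C : Type) : Type
  | leaf (c : C) : GTree C
  | node1 (c : C) (right : GTree C) : GTree C
  | node2 (c : C) (left : GTree C) (right : GTree C) : GTree C

/-- The multiset of leaves of a tree: the current global configuration. -/
def GTree.leaves {C} : GTree C → Multiset C
  | .leaf c => {c}
  | .node1 _ t => t.leaves
  | .node2 _ tl tr => tl.leaves + tr.leaves

/-- The label of the root. -/
def GTree.rootLabel {C} : GTree C → C
  | .leaf c => c
  | .node1 c _ => c
  | .node2 c _ _ => c

/-- The label of the node at a given position (positions are lists of directions
from the root; `true` = right child, `false` = left child). -/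
def GTree.label? {C} : GTree C → List Bool → Option C
  | t, [] => some t.rootLabel
  | .leaf _, _ :: _ => none
  | .node1 _ t, true :: pos => t.label? pos
  | .node1 _ _, false :: _ => none
  | .node2 _ _ tr, true :: pos => tr.label? pos
  | .node2 _ tl _, false :: pos => tl.label? pos

/-- A lock `l` is free in the tree `t` if no current instance holds it. -/
def freeIn {P Γ L} (t : GTree (Conf P Γ L)) (l : L) : Prop :=
  ∀ c ∈ t.leaves, l ∉ c.2.2

/-- One expansion step of a global run: exactly one leaf of the tree gets its
children, according to a transition rule of `M`; `freeL` is the availability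
predicate for lock acquisitions, `pos` records the position of the expanded leaf
and `a` the action of the rule used. -/
inductive ExpandA {n P Γ L} (M : LDPN n P Γ L) (freeL : L → Prop) :
    GTree (Conf P Γ L) → GTree (Conf P Γ L) → List Bool → Act L → Prop
  | simple_tau {i : Fin n} {p p' : P} {γ : Γ} {w u : List Γ} {Lk : Set L} :
      Rule.simple Act.tau p γ p' w ∈ M.rules i →
      ExpandA M freeL (.leaf (p, γ :: u, Lk))
        (.node1 (p, γ :: u, Lk) (.leaf (p', w ++ u, Lk))) [] Act.tau
  | simple_acq {i : Fin n} {p p' : P} {γ : Γ} {w u : List Γ} {Lk : Set L} {l : L} :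
      Rule.simple (Act.acq l) p γ p' w ∈ M.rules i → freeL l →
      ExpandA M freeL (.leaf (p, γ :: u, Lk))
        (.node1 (p, γ :: u, Lk) (.leaf (p', w ++ u, Lk ∪ {l}))) [] (Act.acq l)
  | simple_rel {i : Fin n} {p p' : P} {γ : Γ} {w u : List Γ} {Lk : Set L} {l : L} :
      Rule.simple (Act.rel l) p γ p' w ∈ M.rules i → l ∈ Lk →
      ExpandA M freeL (.leaf (p, γ :: u, Lk))
        (.node1 (p, γ :: u, Lk) (.leaf (p', w ++ u, Lk \ {l}))) [] (Act.rel l)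
  | spawn_tau {i : Fin n} {p p' p₂ : P} {γ : Γ} {w u w₂ : List Γ} {Lk : Set L} :
      Rule.spawn Act.tau p γ p' w p₂ w₂ ∈ M.rules i →
      ExpandA M freeL (.leaf (p, γ :: u, Lk))
        (.node2 (p, γ :: u, Lk) (.leaf (p₂, w₂, (∅ : Set L)))
          (.leaf (p', w ++ u, Lk))) [] Act.tau
  | spawn_acq {i : Fin n} {p p' p₂ : P} {γ : Γ} {w u w₂ : List Γ} {Lk : Set L} {l : L} :
      Rule.spawn (Act.acq l) p γ p' w p₂ w₂ ∈ M.rules i → freeL l →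
      ExpandA M freeL (.leaf (p, γ :: u, Lk))
        (.node2 (p, γ :: u, Lk) (.leaf (p₂, w₂, (∅ : Set L)))
          (.leaf (p', w ++ u, Lk ∪ {l}))) [] (Act.acq l)
  | spawn_rel {i : Fin n} {p p' p₂ : P} {γ : Γ} {w u w₂ : List Γ} {Lk : Set L} {l : L} :
      Rule.spawn (Act.rel l) p γ p' w p₂ w₂ ∈ M.rules i → l ∈ Lk →
      ExpandA M freeL (.leaf (p, γ :: u, Lk))
        (.node2 (p, γ :: u, Lk) (.leaf (p₂, w₂, (∅ : Set L)))
          (.leaf (p', w ++ u, Lk \ {l}))) [] (Act.rel l)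
  | in_node1 {c t t' pos a} :
      ExpandA M freeL t t' pos a →
      ExpandA M freeL (.node1 c t) (.node1 c t') (true :: pos) a
  | in_node2_left {c tl tl' tr pos a} :
      ExpandA M freeL tl tl' pos a →
      ExpandA M freeL (.node2 c tl tr) (.node2 c tl' tr) (false :: pos) a
  | in_node2_right {c tl tr tr' pos a} :
      ExpandA M freeL tr tr' pos a →
      ExpandA M freeL (.node2 c tl tr) (.node2 c tl tr') (true :: pos) a

/-- A global run of `M` from the initial global configuration `{c₀}`:
an increasing sequence of finite trees, starting with the single root `c₀`,
where at each instant the tree either stays unchanged or one leaf is expanded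
(a lock may be acquired only if it is free in the whole current tree). -/
structure GlobalRun {n P Γ L} (M : LDPN n P Γ L) (c₀ : Conf P Γ L) where
  tr : ℕ → GTree (Conf P Γ L)
  init : tr 0 = .leaf c₀
  step : ∀ k, tr (k + 1) = tr k ∨
    ∃ pos a, ExpandA M (freeIn (tr k)) (tr k) (tr (k + 1)) pos a

/-- The event at time `k` of a global run: the leaf at position `pos` is expanded
using a rule with action `a` when passing from `tr k` to `tr (k+1)`. -/
def EventAt {n P Γ L} {M : LDPN n P Γ L} {c₀ : Conf P Γ L} (r : GlobalRun M c₀)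
    (k : ℕ) (pos : List Bool) (a : Act L) : Prop :=
  ExpandA M (freeIn (r.tr k)) (r.tr k) (r.tr (k + 1)) pos a

/-- Some event happens at position `pos` with action `a` at some time. -/
def EventAtPos {n P Γ L} {M : LDPN n P Γ L} {c₀ : Conf P Γ L} (r : GlobalRun M c₀)
    (pos : List Bool) (a : Act L) : Prop :=
  ∃ k, EventAt r k pos a

/-- The node at position `pos` eventually carries label `c`. -/
def InTree {n P Γ L} {M : LDPN n P Γ L} {c₀ : Conf P Γ L} (r : GlobalRun M c₀)
    (pos : List Bool) (c : Conf P Γ L) : Prop :=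
  ∃ k, (r.tr k).label? pos = some c

/-- `m`-th position of the local run (rightmost path) starting at `q`. -/
def locpos (q : List Bool) (m : ℕ) : List Bool :=
  q ++ List.replicate m true

/-- Positions at which a local run starts: the root, or a left child
(the local initial configuration of a dynamically created instance). -/
def LocalStartPos (q : List Bool) : Prop :=
  q = [] ∨ ∃ q', q = q' ++ [false]

/-! ### Nested lock usage -/

/-- The local run starting at `q` uses locks in a nested style: there is a stack
discipline on the lock actions of this local run, i.e. every release releases the
latest acquired lock that has not yet been released. -/
def NestedLocal {n P Γ L} {M : LDPN n P Γ L} {c₀ : Conf P Γ L}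
    (r : GlobalRun M c₀) (q : List Bool) : Prop :=
  ∃ st : ℕ → List L,
    (∀ m l, EventAtPos r (locpos q m) (Act.acq l) → st (m + 1) = l :: st m) ∧
    (∀ m l, EventAtPos r (locpos q m) (Act.rel l) → st m = l :: st (m + 1)) ∧
    (∀ m, EventAtPos r (locpos q m) Act.tau → st (m + 1) = st m)

/-- A global run uses locks in a nested style iff every local run does. -/
def NestedRun {n P Γ L} {M : LDPN n P Γ L} {c₀ : Conf P Γ L} (r : GlobalRun M c₀) : Prop :=
  ∀ q, LocalStartPos q → NestedLocal r q

/-! ### LTL -/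

/-- LTL formulas. -/
inductive LTL (AP : Type) : Type
  | atom (a : AP) : LTL AP
  | neg (φ : LTL AP) : LTL AP
  | conj (φ ψ : LTL AP) : LTL AP
  | next (φ : LTL AP) : LTL AP
  | untl (φ ψ : LTL AP) : LTL AP

/-- Size of an LTL formula. -/
def LTL.size {AP} : LTL AP → ℕ
  | .atom _ => 1
  | .neg φ => φ.size + 1
  | .conj φ ψ => φ.size + ψ.size + 1
  | .next φ => φ.size + 1
  | .untl φ ψ => φ.size + ψ.size + 1

/-- Suffix of an ω-word. -/
def wshift {AP} (σ : ℕ → Set AP) (k : ℕ) : ℕ → Set AP := fun m => σ (m + k)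

/-- Satisfaction of an LTL formula by an ω-word over `2^AP`. -/
def LTL.Sat {AP} (σ : ℕ → Set AP) : LTL AP → Prop
  | .atom a => a ∈ σ 0
  | .neg φ => ¬ LTL.Sat σ φ
  | .conj φ ψ => LTL.Sat σ φ ∧ LTL.Sat σ ψ
  | .next φ => LTL.Sat (wshift σ 1) φ
  | .untl φ ψ => ∃ k, LTL.Sat (wshift σ k) ψ ∧ ∀ j, 1 ≤ j → j < k → LTL.Sat (wshift σ j) φ

/-- The global run `r` satisfies the single-indexed formula `f = ⋀ᵢ fᵢ`
w.r.t. the valuation `lam`: every local run of every instance of `Pᵢ` occurring in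
the run is infinite and its induced ω-word satisfies `fᵢ`. -/
def SatGlobal {n AP P Γ L} {M : LDPN n P Γ L} {c₀ : Conf P Γ L} (r : GlobalRun M c₀)
    (lam : AP → Set (Conf P Γ L)) (f : Fin n → LTL AP) : Prop :=
  ∀ q, LocalStartPos q → (∃ c, InTree r q c) →
    ∃ ρ : ℕ → Conf P Γ L,
      (∀ m, InTree r (locpos q m) (ρ m)) ∧
      ∀ i, (ρ 0).1 ∈ M.states i →
        LTL.Sat (fun m => {ap | ρ m ∈ lam ap}) (f i)

/-- The initial global configuration `{c₀}` satisfies `f`: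
`M` has a global run from `{c₀}` satisfying `f`. -/
def SatFrom {n AP P Γ L} (M : LDPN n P Γ L) (c₀ : Conf P Γ L)
    (lam : AP → Set (Conf P Γ L)) (f : Fin n → LTL AP) : Prop :=
  ∃ r : GlobalRun M c₀, SatGlobal r lam f

/-- The initial global configuration `{c₀}` satisfies `f` via a global run
that uses locks in a nested style. -/
def SatNested {n AP P Γ L} (M : LDPN n P Γ L) (c₀ : Conf P Γ L)
    (lam : AP → Set (Conf P Γ L)) (f : Fin n → LTL AP) : Prop :=
  ∃ r : GlobalRun M c₀, NestedRun r ∧ SatGlobal r lam f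

/-- A simple valuation: whether a local configuration satisfies an atomic
proposition depends only on its control location and its held locks. -/
def SimpleVal {AP P Γ L} (lam : AP → Set (Conf P Γ L)) : Prop :=
  ∀ ap (p : P) (w w' : List Γ) (Lk : Set L), (p, w, Lk) ∈ lam ap ↔ (p, w', Lk) ∈ lam ap

/-! ### Multi-automata -/

/-- An (L-)Multi-automaton with state space `Q`: the initial states are (the images
of) the elements of `S` (control locations, possibly paired with lock sets or
acquisition structures), and each transition is labelled by a stack symbol and a
set of DCLICs (elements of `Dc`). -/
structure MA (S Γ Dc Q : Type) where
  embed : S → Q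
  trans : Q → Γ → Set Dc → Q → Prop
  acc : Set Q

/-- The reachability relation of a multi-automaton, collecting the union of the
DCLIC-sets labelling the transitions used. -/
inductive MA.Steps {S Γ Dc Q} (A : MA S Γ Dc Q) : Q → List Γ → Set Dc → Q → Prop
  | nil (q : Q) : MA.Steps A q [] ∅ q
  | cons {q : Q} {γ : Γ} {D₁ : Set Dc} {q₁ : Q} {w : List Γ} {D₂ : Set Dc} {q₂ : Q} :
      A.trans q γ D₁ q₁ → MA.Steps A q₁ w D₂ q₂ → MA.Steps A q (γ :: w) (D₁ ∪ D₂) q₂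

/-- The language of a multi-automaton: triples `(p, ω, D)` such that from the
initial state for `p` some accepting state is reached reading `ω` while
collecting `D`. -/
def MA.Lang {S Γ Dc Q} (A : MA S Γ Dc Q) : Set (S × List Γ × Set Dc) :=
  {x | ∃ qf ∈ A.acc, A.Steps (A.embed x.1) x.2.1 x.2.2 qf}

/-- The set of transitions of a multi-automaton. -/
def MA.transSet {S Γ Dc Q} (A : MA S Γ Dc Q) : Set (Q × Γ × Set Dc × Q) :=
  {x | A.trans x.1 x.2.1 x.2.2.1 x.2.2.2}

/-- The family `Av` of (L-)multi-automata represents the valuation `lam`: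
a local configuration `(pω, L)` satisfies `ap` iff `((p,L), ω, ∅)` is accepted
by `Av ap`.  (A regular valuation is one representable in this way.) -/
def RegularVal {AP P Γ L} (Qv : Type) (Av : AP → MA (P × Set L) Γ (Conf P Γ L) Qv)
    (lam : AP → Set (Conf P Γ L)) : Prop :=
  ∀ ap (p : P) (w : List Γ) (Lk : Set L),
    (p, w, Lk) ∈ lam ap ↔ ((p, Lk), w, (∅ : Set (Conf P Γ L))) ∈ (Av ap).Lang

/-- `D_fp`: the set of DCLICs of the DPN `M` whose singleton initial global
configuration satisfies `f`. -/
def DfpSet {n AP P Γ} (M : LDPN n P Γ Empty) (lam : AP → Set (Conf P Γ Empty))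
    (f : Fin n → LTL AP) : Set (Conf P Γ Empty) :=
  {c | c ∈ M.DCLICs ∧ SatFrom M c lam f}

/-! ### Acquisition structures -/

/-- An acquisition structure `(R, RH, U, AH, A, X)`. -/
structure AcqStruct (L : Type) where
  R : Set L
  RH : Set (L × L)
  U : Set L
  AH : Set (L × L)
  A : Set L
  X : Set L

/-- Acyclicity of a directed graph on `L`. -/
def RelAcyclic {L : Type} (E : Set (L × L)) : Prop :=
  ∀ l, ¬ Relation.TransGen (fun x y => (x, y) ∈ E) l l

/-- Consistency of an acquisition structure: both graphs are acyclic and the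
held-throughout locks are neither used nor finally acquired. -/
def ASConsistent {L} (as : AcqStruct L) : Prop :=
  RelAcyclic as.RH ∧ RelAcyclic as.AH ∧ (as.X \ as.R) ∩ (as.U ∪ as.A) = ∅

/-- Compatibility of two consistent acquisition structures. -/
def ASCompatible {L} (a b : AcqStruct L) : Prop :=
  a.X ∩ b.X = ∅ ∧
  (a.A ∪ (a.X \ a.R)) ∩ (b.A ∪ (b.X \ b.R)) = ∅ ∧
  RelAcyclic (a.RH ∪ b.RH) ∧
  RelAcyclic (a.AH ∪ b.AH) ∧
  (a.A ∪ a.U) ∩ (b.X \ b.R) = ∅ ∧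
  (b.A ∪ b.U) ∩ (a.X \ a.R) = ∅

/-- Componentwise union of acquisition structures. -/
def asUnion {L} (a b : AcqStruct L) : AcqStruct L :=
  ⟨a.R ∪ b.R, a.RH ∪ b.RH, a.U ∪ b.U, a.AH ∪ b.AH, a.A ∪ b.A, a.X ∪ b.X⟩

/-- Acquisition structures form a finite type when `L` is finite. -/
def acqStructEquiv (L : Type) :
    AcqStruct L ≃ Set L × Set (L × L) × Set L × Set (L × L) × Set L × Set L where
  toFun as := (as.R, as.RH, as.U, as.AH, as.A, as.X)
  invFun x := ⟨x.1, x.2.1, x.2.2.1, x.2.2.2.1, x.2.2.2.2.1, x.2.2.2.2.2⟩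
  left_inv _ := rfl
  right_inv _ := rfl

instance {L : Type} [Finite L] : Finite (AcqStruct L) :=
  Finite.of_equiv _ (acqStructEquiv L).symm

/-- The update of an acquisition structure determined by the action of a rule:
`ASUpd a as' as` holds iff applying a rule with action `a` whose successor
acquisition structure is `as'` yields the acquisition structure `as`
(including the side conditions on `a`). -/
def ASUpd {L} : Act L → AcqStruct L → AcqStruct L → Prop
  | .tau, as', as => as = as'
  | .rel l, as', as =>
      l ∉ as'.X ∪ as'.R ∧
      as = ⟨as'.R ∪ {l}, as'.RH, as'.U, as'.AH, as'.A, as'.X ∪ {l}⟩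
  | .acq l, as', as =>
      (l ∈ as'.R ∩ as'.X ∧
        as = ⟨as'.R \ {l},
              (as'.RH \ (Set.univ ×ˢ {l})) ∪ ({l} ×ˢ (as'.R \ {l})),
              as'.U ∪ {l}, as'.AH, as'.A, as'.X \ {l}⟩) ∨
      (¬ (l ∈ as'.R ∩ as'.X) ∧ l ∉ as'.A ∧ l ∈ as'.X ∧
        as = ⟨as'.R, as'.RH, as'.U,
              as'.AH ∪ ({l} ×ˢ as'.U), as'.A ∪ {l}, as'.X \ {l}⟩)

/-- Lifting of an original rule (together with acquisition structures
`as`, `as'`, `as''`) to a rule of the product DPN. -/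
def liftRule {P Γ L} : Rule P Γ L → AcqStruct L → AcqStruct L → AcqStruct L →
    Rule (P × AcqStruct L) Γ Empty
  | .simple _ p γ p' w, as, as', _ => .simple Act.tau (p, as) γ (p', as') w
  | .spawn _ p γ p' w p₂ w₂, as, as', as'' =>
      .spawn Act.tau (p, as) γ (p', as') w (p₂, as'') w₂

/-- The side conditions under which a rule of the product DPN is generated
from an original rule and acquisition structures `as`, `as'`, `as''`. -/
def prodCond {P Γ L} : Rule P Γ L → AcqStruct L → AcqStruct L → AcqStruct L → Prop
  | .simple a _ _ _ _, as, as', _ =>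
      ASConsistent as ∧ ASConsistent as' ∧ ASUpd a as' as
  | .spawn a _ _ _ _ _ _, as, as', as'' =>
      ASConsistent as ∧ ASConsistent as' ∧ ASConsistent as'' ∧
      ASCompatible as' as'' ∧ as''.R = ∅ ∧ as''.X = ∅ ∧
      ASUpd a (asUnion as' as'') as

/-- The product DPN `M'` of an L-DPN `M` with the consistent acquisition
structures: control locations are pairs `(p, as)` with `as` consistent, and the
rules are those of `M` with the acquisition structures updated accordingly. -/
def productLDPN {n P Γ L} (M : LDPN n P Γ L) : LDPN n (P × AcqStruct L) Γ Empty where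
  states i := {q | q.1 ∈ M.states i ∧ ASConsistent q.2}
  alph i := M.alph i
  rules i := {ru | ∃ r₀ ∈ M.rules i, ∃ as as' as'',
    prodCond r₀ as as' as'' ∧ ru = liftRule r₀ as as' as''}

/-- Lifting of a valuation of the L-DPN to a valuation of the product DPN:
`(p, as)ω ∈ λ'(ap)` iff `(pω, as_X) ∈ λ(ap)`. -/
def liftVal {AP P Γ L} (lam : AP → Set (Conf P Γ L)) :
    AP → Set (Conf (P × AcqStruct L) Γ Empty) :=
  fun ap => {c | (c.1.1, c.2.1, c.1.2.X) ∈ lam ap}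

/-! ### The acquisition structure of a subtree of a global run -/

/-- Start positions of the local-run segments lying in the subtree rooted at `v`:
`v` itself, and the left children below `v`. -/
def LocalStartIn (v q : List Bool) : Prop :=
  q = v ∨ (v <+: q ∧ ∃ q', q = q' ++ [false])

/-- An initial release: a release of `l` at step `m` of the local run starting
at `q`, with no earlier acquisition of `l` in the same local run. -/
def InitRelAt {n P Γ L} {M : LDPN n P Γ L} {c₀ : Conf P Γ L} (r : GlobalRun M c₀)
    (q : List Bool) (k m : ℕ) (l : L) : Prop :=
  EventAt r k (locpos q m) (Act.rel l) ∧
  ∀ m' < m, ¬ EventAtPos r (locpos q m') (Act.acq l)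

/-- A final acquisition: an acquisition of `l` at step `m` of the local run
starting at `q`, with no later release of `l` in the same local run. -/
def FinAcqAt {n P Γ L} {M : LDPN n P Γ L} {c₀ : Conf P Γ L} (r : GlobalRun M c₀)
    (q : List Bool) (k m : ℕ) (l : L) : Prop :=
  EventAt r k (locpos q m) (Act.acq l) ∧
  ∀ m', m < m' → ¬ EventAtPos r (locpos q m') (Act.rel l)

/-- A usage of `l`: an acquisition or release of `l` that is neither a final
acquisition nor an initial release. -/
def UsageAt {n P Γ L} {M : LDPN n P Γ L} {c₀ : Conf P Γ L} (r : GlobalRun M c₀)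
    (q : List Bool) (k m : ℕ) (l : L) : Prop :=
  (EventAt r k (locpos q m) (Act.acq l) ∧ ¬ FinAcqAt r q k m l) ∨
  (EventAt r k (locpos q m) (Act.rel l) ∧ ¬ InitRelAt r q k m l)

/-- The acquisition structure of the subtree of the global run `r` rooted at
position `v`. -/
def acqStructOf {n P Γ L} {M : LDPN n P Γ L} {c₀ : Conf P Γ L} (r : GlobalRun M c₀)
    (v : List Bool) : AcqStruct L where
  R := {l | ∃ q k m, LocalStartIn v q ∧ InitRelAt r q k m l}
  RH := {lp | ∃ q k m, LocalStartIn v q ∧ InitRelAt r q k m lp.2 ∧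
          ∃ q₂ k₂ m₂, LocalStartIn v q₂ ∧ k₂ < k ∧ UsageAt r q₂ k₂ m₂ lp.1}
  U := {l | ∃ q k m, LocalStartIn v q ∧ UsageAt r q k m l}
  AH := {lp | ∃ q k m, LocalStartIn v q ∧ FinAcqAt r q k m lp.1 ∧
          ∃ q₂ k₂ m₂, LocalStartIn v q₂ ∧ k < k₂ ∧ UsageAt r q₂ k₂ m₂ lp.2}
  A := {l | ∃ q k m, LocalStartIn v q ∧ FinAcqAt r q k m l}
  X := {l | ∃ c, InTree r v c ∧ l ∈ c.2.2}


/-! ### Auxiliary infrastructure for the proof -/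

section Aux

attribute [local instance] Classical.propDecidable

namespace GTree

variable {C : Type}

/-- The subtree at a given position. -/
def sub? : GTree C → List Bool → Option (GTree C)
  | t, [] => some t
  | .leaf _, _ :: _ => none
  | .node1 _ t, true :: p => t.sub? p
  | .node1 _ _, false :: _ => none
  | .node2 _ _ tr, true :: p => tr.sub? p
  | .node2 _ tl _, false :: p => tl.sub? p

lemma label?_eq_sub? (t : GTree C) (p : List Bool) :
    t.label? p = (t.sub? p).map rootLabel := by
  induction t generalizing p with
  | leaf c => rcases p with _ | ⟨_ | _, p⟩ <;> simp [label?, sub?]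
  | node1 c t ih => rcases p with _ | ⟨_ | _, p⟩ <;> simp [label?, sub?, ih]
  | node2 c tl tr ihl ihr => rcases p with _ | ⟨_ | _, p⟩ <;> simp [label?, sub?, ihl, ihr]

lemma sub?_append (t : GTree C) (p q : List Bool) :
    t.sub? (p ++ q) = (t.sub? p).bind (fun s => s.sub? q) := by
  induction t generalizing p with
  | leaf c => rcases p with _ | ⟨_ | _, p⟩ <;> simp [sub?]
  | node1 c t ih => rcases p with _ | ⟨_ | _, p⟩ <;> simp [sub?, ih]
  | node2 c tl tr ihl ihr => rcases p with _ | ⟨_ | _, p⟩ <;> simp [sub?, ihl, ihr]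

lemma mem_leaves_of_sub? {t : GTree C} {p : List Bool} {c : C}
    (h : t.sub? p = some (.leaf c)) : c ∈ t.leaves := by
  induction t generalizing p with
  | leaf c' =>
    rcases p with _ | ⟨_ | _, p⟩ <;> simp [sub?] at h
    subst h; simp [leaves]
  | node1 c' t ih =>
    rcases p with _ | ⟨_ | _, p⟩ <;> simp [sub?] at h
    exact ih h
  | node2 c' tl tr ihl ihr =>
    rcases p with _ | ⟨_ | _, p⟩ <;> simp [sub?] at h
    · simp only [leaves, Multiset.mem_add]; exact Or.inl (ihl h)
    · simp only [leaves, Multiset.mem_add]; exact Or.inr (ihr h)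

/-- On any tree there is a leaf along the all-`true` path. -/
lemma exists_true_leaf (t : GTree C) :
    ∃ (j : ℕ) (c : C), t.sub? (List.replicate j true) = some (.leaf c) := by
  induction t with
  | leaf c => exact ⟨0, c, rfl⟩
  | node1 c t ih =>
    obtain ⟨j, c', hj⟩ := ih
    exact ⟨j + 1, c', by simpa [List.replicate_succ, sub?] using hj⟩
  | node2 c tl tr ihl ihr =>
    obtain ⟨j, c', hj⟩ := ihr
    exact ⟨j + 1, c', by simpa [List.replicate_succ, sub?] using hj⟩

end GTree

/-- The effect of an action on a set of held locks. -/
def actLk {L : Type} : Act L → Set L → Set L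
  | .tau, s => s
  | .acq l, s => s ∪ {l}
  | .rel l, s => s \ {l}

variable {n : ℕ} {P Γ L : Type} {M : LDPN n P Γ L}

/-- Main inversion lemma for one expansion step. -/
lemma expand_inv {f : L → Prop} {t t' : GTree (Conf P Γ L)} {pos : List Bool} {a : Act L}
    (h : ExpandA M f t t' pos a) :
    ∃ c c' : Conf P Γ L, t.sub? pos = some (.leaf c) ∧
      t'.sub? (pos ++ [true]) = some (.leaf c') ∧
      c'.2.2 = actLk a c.2.2 ∧
      (∀ l, a = Act.acq l → f l) ∧
      (∀ l, a = Act.rel l → l ∈ c.2.2) ∧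
      (t'.sub? (pos ++ [false]) = none ∨
        ∃ c₂ : Conf P Γ L, t'.sub? (pos ++ [false]) = some (.leaf c₂) ∧ c₂.2.2 = ∅) := by
  induction h with
  | simple_tau hr =>
    exact ⟨_, _, rfl, rfl, rfl, by simp, by simp, Or.inl rfl⟩
  | simple_acq hr hf =>
    refine ⟨_, _, rfl, rfl, rfl, ?_, by simp, Or.inl rfl⟩
    rintro l' h'; cases h'; exact hf
  | simple_rel hr hl =>
    refine ⟨_, _, rfl, rfl, rfl, by simp, ?_, Or.inl rfl⟩
    rintro l' h'; cases h'; exact hl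
  | spawn_tau hr =>
    exact ⟨_, _, rfl, rfl, rfl, by simp, by simp, Or.inr ⟨_, rfl, rfl⟩⟩
  | spawn_acq hr hf =>
    refine ⟨_, _, rfl, rfl, rfl, ?_, by simp, Or.inr ⟨_, rfl, rfl⟩⟩
    rintro l' h'; cases h'; exact hf
  | spawn_rel hr hl =>
    refine ⟨_, _, rfl, rfl, rfl, by simp, ?_, Or.inr ⟨_, rfl, rfl⟩⟩
    rintro l' h'; cases h'; exact hl
  | in_node1 _ ih =>
    obtain ⟨c, c', h1, h2, h3, h4, h5, h6⟩ := ih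
    exact ⟨c, c', h1, h2, h3, h4, h5, h6⟩
  | in_node2_left _ ih =>
    obtain ⟨c, c', h1, h2, h3, h4, h5, h6⟩ := ih
    exact ⟨c, c', h1, h2, h3, h4, h5, h6⟩
  | in_node2_right _ ih =>
    obtain ⟨c, c', h1, h2, h3, h4, h5, h6⟩ := ih
    exact ⟨c, c', h1, h2, h3, h4, h5, h6⟩

/-- Labels persist through an expansion step. -/
lemma expand_label_persist {f : L → Prop} {t t' : GTree (Conf P Γ L)} {pos : List Bool}
    {a : Act L} (h : ExpandA M f t t' pos a) :
    ∀ p c, t.label? p = some c → t'.label? p = some c := by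
  induction h with
  | simple_tau hr => rintro (_ | ⟨_ | _, p⟩) c hc <;> simp_all [GTree.label?, GTree.rootLabel]
  | simple_acq hr hf => rintro (_ | ⟨_ | _, p⟩) c hc <;> simp_all [GTree.label?, GTree.rootLabel]
  | simple_rel hr hl => rintro (_ | ⟨_ | _, p⟩) c hc <;> simp_all [GTree.label?, GTree.rootLabel]
  | spawn_tau hr => rintro (_ | ⟨_ | _, p⟩) c hc <;> simp_all [GTree.label?, GTree.rootLabel]
  | spawn_acq hr hf => rintro (_ | ⟨_ | _, p⟩) c hc <;> simp_all [GTree.label?, GTree.rootLabel]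
  | spawn_rel hr hl => rintro (_ | ⟨_ | _, p⟩) c hc <;> simp_all [GTree.label?, GTree.rootLabel]
  | in_node1 _ ih =>
    rintro (_ | ⟨_ | _, p⟩) c hc
    · simpa [GTree.label?, GTree.rootLabel] using hc
    · simp [GTree.label?] at hc
    · simp only [GTree.label?] at hc ⊢; exact ih _ _ hc
  | in_node2_left _ ih =>
    rintro (_ | ⟨_ | _, p⟩) c hc
    · simpa [GTree.label?, GTree.rootLabel] using hc
    · simp only [GTree.label?] at hc ⊢; exact ih _ _ hc
    · simp only [GTree.label?] at hc ⊢; exact hc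
  | in_node2_right _ ih =>
    rintro (_ | ⟨_ | _, p⟩) c hc
    · simpa [GTree.label?, GTree.rootLabel] using hc
    · simp only [GTree.label?] at hc ⊢; exact hc
    · simp only [GTree.label?] at hc ⊢; exact ih _ _ hc

/-- New labels appear only at the two children of the expanded position. -/
lemma expand_label_new {f : L → Prop} {t t' : GTree (Conf P Γ L)} {pos : List Bool}
    {a : Act L} (h : ExpandA M f t t' pos a) :
    ∀ p c, t'.label? p = some c →
      t.label? p = some c ∨ p = pos ++ [true] ∨ p = pos ++ [false] := by
  induction h with
  | simple_tau hr =>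
    rintro (_ | ⟨_ | _, (_ | ⟨_ | _, p⟩)⟩) c hc <;>
      simp_all [GTree.label?, GTree.rootLabel]
  | simple_acq hr hf =>
    rintro (_ | ⟨_ | _, (_ | ⟨_ | _, p⟩)⟩) c hc <;>
      simp_all [GTree.label?, GTree.rootLabel]
  | simple_rel hr hl =>
    rintro (_ | ⟨_ | _, (_ | ⟨_ | _, p⟩)⟩) c hc <;>
      simp_all [GTree.label?, GTree.rootLabel]
  | spawn_tau hr =>
    rintro (_ | ⟨_ | _, (_ | ⟨_ | _, p⟩)⟩) c hc <;>
      simp_all [GTree.label?, GTree.rootLabel]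
  | spawn_acq hr hf =>
    rintro (_ | ⟨_ | _, (_ | ⟨_ | _, p⟩)⟩) c hc <;>
      simp_all [GTree.label?, GTree.rootLabel]
  | spawn_rel hr hl =>
    rintro (_ | ⟨_ | _, (_ | ⟨_ | _, p⟩)⟩) c hc <;>
      simp_all [GTree.label?, GTree.rootLabel]
  | in_node1 _ ih =>
    rintro (_ | ⟨_ | _, p⟩) c hc
    · exact Or.inl hc
    · simp [GTree.label?] at hc
    · simp only [GTree.label?] at hc
      rcases ih _ _ hc with h' | h' | h'
      · exact Or.inl h'
      · exact Or.inr (Or.inl (by simp [h']))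
      · exact Or.inr (Or.inr (by simp [h']))
  | in_node2_left _ ih =>
    rintro (_ | ⟨_ | _, p⟩) c hc
    · exact Or.inl hc
    · simp only [GTree.label?] at hc
      rcases ih _ _ hc with h' | h' | h'
      · exact Or.inl h'
      · exact Or.inr (Or.inl (by simp [h']))
      · exact Or.inr (Or.inr (by simp [h']))
    · exact Or.inl hc
  | in_node2_right _ ih =>
    rintro (_ | ⟨_ | _, p⟩) c hc
    · exact Or.inl hc
    · exact Or.inl hc
    · simp only [GTree.label?] at hc
      rcases ih _ _ hc with h' | h' | h'
      · exact Or.inl h'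
      · exact Or.inr (Or.inl (by simp [h']))
      · exact Or.inr (Or.inr (by simp [h']))

/-- Two expansion steps between the same trees happen at the same position. -/
lemma expand_pos_unique {f f' : L → Prop} {t t' : GTree (Conf P Γ L)} {pos pos' : List Bool}
    {a a' : Act L} (h : ExpandA M f t t' pos a) (h' : ExpandA M f' t t' pos' a') :
    pos = pos' := by
  obtain ⟨c, c', hs, hs', -⟩ := expand_inv h
  obtain ⟨d, d', ht, -⟩ := expand_inv h'
  have hlab : t'.label? (pos ++ [true]) = some c' := by
    rw [GTree.label?_eq_sub?, hs']; rfl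
  rcases expand_label_new h' _ _ hlab with hold | heq | heq
  · rw [GTree.label?_eq_sub?, GTree.sub?_append, hs] at hold
    simp [GTree.sub?] at hold
  · exact List.append_cancel_right heq
  · have := congrArg List.getLast? heq
    simp [List.getLast?_concat] at this

variable {c₀ : Conf P Γ L} {r : GlobalRun M c₀}

lemma label_mono {k k' : ℕ} {p : List Bool} {c : Conf P Γ L} (hk : k ≤ k')
    (h : (r.tr k).label? p = some c) : (r.tr k').label? p = some c := by
  induction k', hk using Nat.le_induction with
  | base => exact h
  | succ k' hk ih =>
    rcases r.step k' with he | ⟨pos, a, hex⟩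
    · rwa [he]
    · exact expand_label_persist hex _ _ ih

lemma InTree_unique {p : List Bool} {c c' : Conf P Γ L}
    (h : InTree r p c) (h' : InTree r p c') : c = c' := by
  obtain ⟨s, hs⟩ := h; obtain ⟨s', hs'⟩ := h'
  rcases le_total s s' with hle | hle
  · exact Option.some.inj ((label_mono hle hs).symm.trans hs')
  · exact (Option.some.inj ((label_mono hle hs').symm.trans hs)).symm

lemma event_time_not_lt {k k' : ℕ} {p : List Bool} {a a' : Act L}
    (h : EventAt r k p a) (h' : EventAt r k' p a') (hlt : k < k') : False := by
  obtain ⟨c, c', hs, hs', -⟩ := expand_inv h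
  obtain ⟨d, -, ht, -⟩ := expand_inv h'
  have h1 : (r.tr (k+1)).label? (p ++ [true]) = some c' := by
    rw [GTree.label?_eq_sub?, hs']; rfl
  have h2 := label_mono hlt h1
  rw [GTree.label?_eq_sub?, GTree.sub?_append, ht] at h2
  simp [GTree.sub?] at h2

lemma event_time_unique {k k' : ℕ} {p : List Bool} {a a' : Act L}
    (h : EventAt r k p a) (h' : EventAt r k' p a') : k = k' := by
  rcases lt_trichotomy k k' with hl | he | hl
  · exact (event_time_not_lt h h' hl).elim
  · exact he
  · exact (event_time_not_lt h' h hl).elim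

lemma creation_aux : ∀ (s : ℕ) (p : List Bool) (c : Conf P Γ L),
    (r.tr s).label? p = some c → p ≠ [] →
    ∃ k pos a, k < s ∧ EventAt r k pos a ∧ (p = pos ++ [true] ∨ p = pos ++ [false]) ∧
      (r.tr (k+1)).label? p = some c := by
  intro s
  induction s with
  | zero =>
    intro p c hc hp
    rw [r.init] at hc
    rcases p with _ | ⟨b, p⟩
    · exact absurd rfl hp
    · rcases b <;> simp [GTree.label?] at hc
  | succ s ih =>
    intro p c hc hp
    rcases r.step s with he | ⟨pos, a, hex⟩
    · rw [he] at hc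
      obtain ⟨k, pos, a, hk, h2, h3, h4⟩ := ih p c hc hp
      exact ⟨k, pos, a, Nat.lt_succ_of_lt hk, h2, h3, h4⟩
    · rcases expand_label_new hex _ _ hc with hold | hnew | hnew
      · obtain ⟨k, pos', a', hk, h2, h3, h4⟩ := ih p c hold hp
        exact ⟨k, pos', a', Nat.lt_succ_of_lt hk, h2, h3, h4⟩
      · exact ⟨s, pos, a, Nat.lt_succ_self s, hex, Or.inl hnew, hc⟩
      · exact ⟨s, pos, a, Nat.lt_succ_self s, hex, Or.inr hnew, hc⟩

lemma creation_true {p : List Bool} {c' : Conf P Γ L} (h : InTree r (p ++ [true]) c') :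
    ∃ k a c, EventAt r k p a ∧ (r.tr k).sub? p = some (.leaf c) ∧
      InTree r p c ∧ c'.2.2 = actLk a c.2.2 ∧
      (r.tr (k+1)).sub? (p ++ [true]) = some (.leaf c') := by
  obtain ⟨s, hs⟩ := h
  obtain ⟨k, pos, a, hk, hev, hpos, hlab⟩ := creation_aux s _ _ hs (by simp)
  have hpe : p = pos := by
    rcases hpos with h1 | h1
    · exact List.append_cancel_right h1
    · have := congrArg List.getLast? h1; simp [List.getLast?_concat] at this
  subst hpe
  obtain ⟨c, c'', hsub, hsub', hact, -⟩ := expand_inv hev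
  have hlab' : (r.tr (k+1)).label? (p ++ [true]) = some c'' := by
    rw [GTree.label?_eq_sub?, hsub']; rfl
  have hcc : c'' = c' := Option.some.inj (hlab'.symm.trans hlab)
  subst hcc
  exact ⟨k, a, c, hev, hsub, ⟨k, by rw [GTree.label?_eq_sub?, hsub]; rfl⟩, hact, hsub'⟩

lemma creation_false {p : List Bool} {c : Conf P Γ L} (h : InTree r (p ++ [false]) c) :
    c.2.2 = ∅ := by
  obtain ⟨s, hs⟩ := h
  obtain ⟨k, pos, a, hk, hev, hpos, hlab⟩ := creation_aux s _ _ hs (by simp)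
  have hpe : p = pos := by
    rcases hpos with h1 | h1
    · have := congrArg List.getLast? h1; simp [List.getLast?_concat] at this
    · exact List.append_cancel_right h1
  subst hpe
  obtain ⟨c1, c2, hsub, hsub', hact, -, -, hsp⟩ := expand_inv hev
  rcases hsp with hnone | ⟨c₂, hsome, hempty⟩
  · rw [GTree.label?_eq_sub?, hnone] at hlab; simp at hlab
  · rw [GTree.label?_eq_sub?, hsome] at hlab
    simp only [Option.map_some] at hlab
    have : c₂ = c := Option.some.inj hlab
    exact this ▸ hempty

lemma locpos_zero (q : List Bool) : locpos q 0 = q := by simp [locpos]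

lemma locpos_add (q : List Bool) (a b : ℕ) :
    locpos q (a + b) = locpos q a ++ List.replicate b true := by
  unfold locpos
  rw [List.replicate_add, List.append_assoc]

lemma locpos_succ (q : List Bool) (m : ℕ) : locpos q (m+1) = locpos q m ++ [true] := by
  simpa using locpos_add q m 1

lemma label_of_append {s : ℕ} {p x : List Bool} {c : Conf P Γ L}
    (h : (r.tr s).label? (p ++ x) = some c) : ∃ c', (r.tr s).label? p = some c' := by
  rw [GTree.label?_eq_sub?, GTree.sub?_append] at h
  rcases hsp : (r.tr s).sub? p with _ | t₀
  · rw [hsp] at h; simp at h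
  · exact ⟨t₀.rootLabel, by rw [GTree.label?_eq_sub?, hsp]; rfl⟩

lemma event_step_lt {q : List Bool} {m m' k k' : ℕ} {a a' : Act L}
    (h : EventAt r k (locpos q m) a) (h' : EventAt r k' (locpos q m') a') (hm : m < m') :
    k < k' := by
  obtain ⟨c, -, hs, -⟩ := expand_inv h
  obtain ⟨d, -, ht, -⟩ := expand_inv h'
  have hnone : (r.tr k).label? (locpos q (m+1)) = none := by
    rw [locpos_succ, GTree.label?_eq_sub?, GTree.sub?_append, hs]; rfl
  have h1 : (r.tr k').label? (locpos q m') = some d := by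
    rw [GTree.label?_eq_sub?, ht]; rfl
  have hmm : m' = (m+1) + (m' - (m+1)) := by omega
  rw [hmm, locpos_add] at h1
  obtain ⟨c', hc'⟩ := label_of_append h1
  by_contra hnk
  have hle : k' ≤ k := by omega
  have := label_mono hle hc'
  rw [this] at hnone
  exact absurd hnone (by simp)

lemma InTree_ancestor {q : List Bool} {m j : ℕ} {c : Conf P Γ L}
    (h : InTree r (locpos q m) c) (hj : j ≤ m) : ∃ c', InTree r (locpos q j) c' := by
  obtain ⟨s, hs⟩ := h
  have hm : m = j + (m - j) := by omega
  rw [hm, locpos_add] at hs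
  obtain ⟨c', hc'⟩ := label_of_append hs
  exact ⟨c', s, hc'⟩

lemma not_free {s : ℕ} {l : L} (p₀ : List Bool)
    (hlab : ∃ c0, (r.tr s).label? p₀ = some c0)
    (hold : ∀ j c', (r.tr s).sub? (p₀ ++ List.replicate j true) = some (.leaf c') →
      l ∈ c'.2.2) :
    ¬ freeIn (r.tr s) l := by
  obtain ⟨c0, h0⟩ := hlab
  rw [GTree.label?_eq_sub?] at h0
  rcases hsp : (r.tr s).sub? p₀ with _ | t₀
  · rw [hsp] at h0; simp at h0
  · obtain ⟨j, c', hj⟩ := GTree.exists_true_leaf t₀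
    have hsub : (r.tr s).sub? (p₀ ++ List.replicate j true) = some (.leaf c') := by
      rw [GTree.sub?_append, hsp]; exact hj
    intro hf
    exact hf c' (GTree.mem_leaves_of_sub? hsub) (hold j c' hsub)

lemma run_keep {q : List Bool} {l : L} {j₀ mb : ℕ} {c0 : Conf P Γ L}
    (h0 : InTree r (locpos q j₀) c0) (hl : l ∈ c0.2.2)
    (hnr : ∀ j, j₀ ≤ j → j < mb → ∀ k, ¬ EventAt r k (locpos q j) (Act.rel l)) :
    ∀ j, j₀ ≤ j → j ≤ mb → ∀ c, InTree r (locpos q j) c → l ∈ c.2.2 := by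
  intro j hj
  induction j, hj using Nat.le_induction with
  | base => intro _ c hc; rw [InTree_unique hc h0]; exact hl
  | succ j hj ih =>
    intro hle c hc
    rw [locpos_succ] at hc
    obtain ⟨k, a, cj, hev, hsub, hin, hact, -⟩ := creation_true hc
    have hlj : l ∈ cj.2.2 := ih (by omega) cj hin
    rw [hact]
    cases a with
    | tau => exact hlj
    | acq l' => exact Or.inl hlj
    | rel l' =>
      refine ⟨hlj, fun heq => ?_⟩
      have hll : l = l' := heq
      subst hll
      exact hnr j hj (by omega) k hev

lemma run_absent {q : List Bool} {l : L} {m : ℕ} {c0 : Conf P Γ L}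
    (h0 : InTree r (locpos q 0) c0) (hl : l ∉ c0.2.2)
    (hna : ∀ j, j < m → ∀ k, ¬ EventAt r k (locpos q j) (Act.acq l)) :
    ∀ j, j ≤ m → ∀ c, InTree r (locpos q j) c → l ∉ c.2.2 := by
  intro j
  induction j with
  | zero => intro _ c hc; rw [InTree_unique hc h0]; exact hl
  | succ j ih =>
    intro hle c hc
    rw [locpos_succ] at hc
    obtain ⟨k, a, cj, hev, hsub, hin, hact, -⟩ := creation_true hc
    have hlj : l ∉ cj.2.2 := ih (by omega) cj hin
    rw [hact]
    cases a with
    | tau => exact hlj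
    | acq l' =>
      rintro (h | h)
      · exact hlj h
      · have hll : l = l' := h
        subst hll
        exact hna j (by omega) k hev
    | rel l' => exact fun h => hlj h.1

lemma run_back {q : List Bool} {l : L} {m : ℕ} {cm : Conf P Γ L}
    (hm : InTree r (locpos q m) cm) (hl : l ∈ cm.2.2)
    (hna : ∀ j, j < m → ∀ k, ¬ EventAt r k (locpos q j) (Act.acq l)) :
    ∀ j, j ≤ m → ∀ c, InTree r (locpos q j) c → l ∈ c.2.2 := by
  have key : ∀ d j, j + d = m → ∀ c, InTree r (locpos q j) c → l ∈ c.2.2 := by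
    intro d
    induction d with
    | zero =>
      intro j hj c hc
      have hjm : j = m := by omega
      subst hjm
      rw [InTree_unique hc hm]; exact hl
    | succ d ih =>
      intro j hj c hc
      obtain ⟨c1, hc1⟩ := InTree_ancestor hm (show j+1 ≤ m by omega)
      have hl1 : l ∈ c1.2.2 := ih (j+1) (by omega) c1 hc1
      rw [locpos_succ] at hc1
      obtain ⟨k, a, cj, hev, hsub, hin, hact, -⟩ := creation_true hc1
      have hcj : c = cj := InTree_unique hc hin
      rw [hcj]
      rw [hact] at hl1
      cases a with
      | tau => exact hl1
      | acq l' =>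
        rcases hl1 with h | h
        · exact h
        · have hll : l = l' := h
          subst hll
          exact absurd hev (hna j (by omega) k)
      | rel l' => exact hl1.1
  intro j hj c hc
  exact key (m - j) j (by omega) c hc

/-! #### Counting holders of a lock -/

noncomputable def cnt (t : GTree (Conf P Γ L)) (b : L) : ℕ :=
  Multiset.countP (fun c => b ∈ c.2.2) t.leaves

lemma cnt_leaf (c : Conf P Γ L) (b : L) :
    cnt (GTree.leaf c) b = if b ∈ c.2.2 then 1 else 0 := by
  show Multiset.countP _ (c ::ₘ 0) = _
  rw [Multiset.countP_cons, Multiset.countP_zero]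
  omega

lemma cnt_node1 (c : Conf P Γ L) (t : GTree (Conf P Γ L)) (b : L) :
    cnt (GTree.node1 c t) b = cnt t b := rfl

lemma cnt_node2 (c : Conf P Γ L) (tl tr : GTree (Conf P Γ L)) (b : L) :
    cnt (GTree.node2 c tl tr) b = cnt tl b + cnt tr b := by
  simp [cnt, GTree.leaves]

lemma one_le_cnt {t : GTree (Conf P Γ L)} {c : Conf P Γ L} {b : L}
    (hc : c ∈ t.leaves) (hb : b ∈ c.2.2) : 1 ≤ cnt t b := by
  have : 0 < cnt t b := Multiset.countP_pos.mpr ⟨c, hc, hb⟩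
  omega

lemma cnt_eq_zero {t : GTree (Conf P Γ L)} {b : L} (hf : freeIn t b) : cnt t b = 0 :=
  Multiset.countP_eq_zero.mpr (fun c hc => hf c hc)

lemma two_le_cnt {t : GTree (Conf P Γ L)} {p1 p2 : List Bool} {c1 c2 : Conf P Γ L} {b : L}
    (h1 : t.sub? p1 = some (.leaf c1)) (h2 : t.sub? p2 = some (.leaf c2))
    (hne : p1 ≠ p2) (hb1 : b ∈ c1.2.2) (hb2 : b ∈ c2.2.2) : 2 ≤ cnt t b := by
  induction t generalizing p1 p2 with
  | leaf c =>
    rcases p1 with _ | ⟨_ | _, p1⟩ <;> rcases p2 with _ | ⟨_ | _, p2⟩ <;>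
      simp [GTree.sub?] at h1 h2 <;> exact absurd rfl hne
  | node1 c t ih =>
    rcases p1 with _ | ⟨_ | _, p1⟩ <;> rcases p2 with _ | ⟨_ | _, p2⟩ <;>
      simp [GTree.sub?] at h1 h2
    rw [cnt_node1]
    exact ih h1 h2 (fun h => hne (by rw [h])) 
  | node2 c tl tr ihl ihr =>
    rw [cnt_node2]
    rcases p1 with _ | ⟨_ | _, p1⟩ <;> rcases p2 with _ | ⟨_ | _, p2⟩ <;>
      simp [GTree.sub?] at h1 h2
    · -- p1 = false :: p1 (tl), p2 = false :: p2 (tl)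
      have := ihl h1 h2 (fun h => hne (by rw [h]))
      omega
    · -- p1 in tl, p2 in tr
      have ha := one_le_cnt (GTree.mem_leaves_of_sub? h1) hb1
      have hb := one_le_cnt (GTree.mem_leaves_of_sub? h2) hb2
      omega
    · -- p1 in tr, p2 in tl
      have ha := one_le_cnt (GTree.mem_leaves_of_sub? h2) hb2
      have hb := one_le_cnt (GTree.mem_leaves_of_sub? h1) hb1
      omega
    · have := ihr h1 h2 (fun h => hne (by rw [h]))
      omega

lemma cnt_step {f : L → Prop} {t t' : GTree (Conf P Γ L)} {pos : List Bool} {a : Act L}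
    (h : ExpandA M f t t' pos a) (b : L) :
    cnt t' b ≤ cnt t b + (if a = Act.acq b then 1 else 0) := by
  induction h with
  | @simple_tau i p p' γ w u Lk hr => simp [cnt_node1, cnt_leaf]
  | @simple_acq i p p' γ w u Lk l hr hf =>
    rw [cnt_node1, cnt_leaf, cnt_leaf]
    by_cases hbl : b = l
    · subst hbl
      rw [if_pos rfl]
      split_ifs <;> omega
    · rw [if_neg (fun hh : Act.acq l = Act.acq b => hbl (by cases hh; rfl))]
      have hmem : (b ∈ Lk ∪ {l}) ↔ b ∈ Lk := by
        constructor
        · rintro (h | h)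
          · exact h
          · exact absurd h hbl
        · exact Or.inl
      split_ifs with h1 h2 h3
      · omega
      · exact absurd (hmem.mp h1) h2
      · omega
      · omega
  | @simple_rel i p p' γ w u Lk l hr hl =>
    rw [cnt_node1, cnt_leaf, cnt_leaf,
      if_neg (fun hh : Act.rel l = Act.acq b => by cases hh)]
    split_ifs with h1 h2 h3
    · omega
    · exact absurd h1.1 h2
    · omega
    · omega
  | @spawn_tau i p p' p₂ γ w u w₂ Lk hr =>
    rw [cnt_node2, cnt_leaf, cnt_leaf, cnt_leaf]
    simp
  | @spawn_acq i p p' p₂ γ w u w₂ Lk l hr hf =>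
    rw [cnt_node2, cnt_leaf, cnt_leaf, cnt_leaf]
    simp only [Set.mem_empty_iff_false, if_false]
    by_cases hbl : b = l
    · subst hbl
      rw [if_pos rfl]
      split_ifs <;> omega
    · rw [if_neg (fun hh : Act.acq l = Act.acq b => hbl (by cases hh; rfl))]
      have hmem : (b ∈ Lk ∪ {l}) ↔ b ∈ Lk := by
        constructor
        · rintro (h | h)
          · exact h
          · exact absurd h hbl
        · exact Or.inl
      split_ifs with h1 h2 h3
      · omega
      · exact absurd (hmem.mp h1) h2
      · omega
      · omega
  | @spawn_rel i p p' p₂ γ w u w₂ Lk l hr hl =>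
    rw [cnt_node2, cnt_leaf, cnt_leaf, cnt_leaf]
    simp only [Set.mem_empty_iff_false, if_false]
    rw [if_neg (fun hh : Act.rel l = Act.acq b => by cases hh)]
    split_ifs with h1 h2 h3
    · omega
    · exact absurd h1.1 h2
    · omega
    · omega
  | in_node1 _ ih => rw [cnt_node1, cnt_node1]; exact ih
  | in_node2_left _ ih => rw [cnt_node2, cnt_node2]; omega
  | in_node2_right _ ih => rw [cnt_node2, cnt_node2]; omega

lemma cnt_le_one (k : ℕ) (b : L) : cnt (r.tr k) b ≤ 1 := by
  induction k with
  | zero =>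
    rw [r.init, cnt_leaf]
    split <;> omega
  | succ k ih =>
    rcases r.step k with he | ⟨pos, a, hex⟩
    · rw [he]; exact ih
    · have hs := cnt_step hex b
      by_cases hab : a = Act.acq b
      · subst hab
        obtain ⟨c, c', -, -, -, h4, -⟩ := expand_inv hex
        have hfree : freeIn (r.tr k) b := h4 b rfl
        rw [cnt_eq_zero hfree, if_pos rfl] at hs
        omega
      · rw [if_neg hab] at hs
        omega

/-! #### Injectivity of local-run positions -/

lemma localstart_prefix {v q : List Bool} (h : LocalStartIn v q) : v <+: q := by
  rcases h with rfl | ⟨hp, -⟩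
  · exact List.prefix_rfl
  · exact hp

lemma localstart_prefix_locpos {v q : List Bool} (h : LocalStartIn v q) (m : ℕ) :
    v <+: locpos q m :=
  (localstart_prefix h).trans ⟨List.replicate m true, rfl⟩

lemma locpos_inj_aux {v q q' : List Bool} {m m' : ℕ} (hq : LocalStartIn v q)
    (hq' : LocalStartIn v q') (h : locpos q m = locpos q' m')
    (hle : q.length ≤ q'.length) : q = q' := by
  have hpre : q <+: q' := by
    have h1 : q <+: locpos q' m' := h ▸ ⟨List.replicate m true, rfl⟩
    exact List.prefix_of_prefix_length_le h1 ⟨List.replicate m' true, rfl⟩ hle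
  obtain ⟨s, rfl⟩ := hpre
  have hs : List.replicate m true = s ++ List.replicate m' true := by
    have h2 := h
    unfold locpos at h2
    rw [List.append_assoc] at h2
    exact List.append_cancel_left h2
  rcases List.eq_nil_or_concat s with rfl | ⟨s₀, x, rfl⟩
  · simp
  · exfalso
    have hx : x = true := by
      have hxs : x ∈ s₀.concat x := by simp
      have hxr : x ∈ List.replicate m true := hs ▸ List.mem_append_left _ hxs
      exact List.eq_of_mem_replicate hxr
    subst hx
    have hcc : q ++ s₀.concat true = (q ++ s₀) ++ [true] := by
      simp [List.concat_eq_append]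
    rcases hq' with hv | ⟨-, q'', hq''⟩
    · rcases hq with rfl | ⟨hpv, -⟩
      · have h1 := congrArg List.length hv
        simp only [List.concat_eq_append, List.length_append, List.length_singleton] at h1
        omega
      · have h1 := congrArg List.length hv
        have h2 := hpv.length_le
        simp only [List.concat_eq_append, List.length_append, List.length_singleton] at h1
        omega
    · rw [hcc] at hq''
      have h1 := congrArg List.getLast? hq''
      simp [List.getLast?_concat] at h1

lemma locpos_inj {v q q' : List Bool} {m m' : ℕ} (hq : LocalStartIn v q)
    (hq' : LocalStartIn v q') (h : locpos q m = locpos q' m') : q = q' ∧ m = m' := by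
  have hqq : q = q' := by
    rcases le_total q.length q'.length with hle | hle
    · exact locpos_inj_aux hq hq' h hle
    · exact (locpos_inj_aux hq' hq h.symm hle).symm
  subst hqq
  refine ⟨rfl, ?_⟩
  have h2 := h
  unfold locpos at h2
  have := List.append_cancel_left h2
  have := congrArg List.length this
  simpa using this

/-! #### Initial releases and final acquisitions -/

lemma locpos_def (q : List Bool) (m : ℕ) : locpos q m = q ++ List.replicate m true := rfl

variable {v : List Bool}

/-- An initial release can only happen in the local run starting at `v` itself. -/
lemma initrel_q_eq {q : List Bool} {k m : ℕ} {l : L} (hq : LocalStartIn v q)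
    (h : InitRelAt r q k m l) : q = v := by
  rcases hq with rfl | ⟨-, q'', rfl⟩
  · rfl
  · exfalso
    obtain ⟨c, -, hsub, -, -, -, hrel, -⟩ := expand_inv h.1
    have hl : l ∈ c.2.2 := hrel l rfl
    have hin : InTree r (locpos (q'' ++ [false]) m) c :=
      ⟨k, by rw [GTree.label?_eq_sub?, hsub]; rfl⟩
    obtain ⟨c0, hc0⟩ := InTree_ancestor hin (Nat.zero_le m)
    have hc0' : InTree r (q'' ++ [false]) c0 := by rwa [locpos_zero] at hc0
    have hz : c0.2.2 = ∅ := creation_false hc0'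
    have habs := run_absent (l := l) (m := m) (by rwa [locpos_zero])
      (by rw [hz]; exact Set.notMem_empty l)
      (fun j hj k' hk' => h.2 j hj ⟨k', hk'⟩) m le_rfl c hin
    exact habs hl

/-- Before an initial release the lock is held all along the local run. -/
lemma initrel_holds {k m : ℕ} {l : L} (h : InitRelAt r v k m l) :
    ∀ j, j ≤ m → ∀ c, InTree r (locpos v j) c → l ∈ c.2.2 := by
  obtain ⟨c, -, hsub, -, -, -, hrel, -⟩ := expand_inv h.1
  exact run_back (q := v) ⟨k, by rw [GTree.label?_eq_sub?, hsub]; rfl⟩ (hrel l rfl)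
    (fun j hj k' hk' => h.2 j hj ⟨k', hk'⟩)

/-- No acquisition of `l` below `v` at a time `≤` its initial release. -/
lemma initrel_no_acq_le {k m k₂ : ℕ} {l : L} {pos₂ : List Bool}
    (h : InitRelAt r v k m l) (hacq : EventAt r k₂ pos₂ (Act.acq l))
    (hpre : v <+: pos₂) (hk : k₂ ≤ k) : False := by
  obtain ⟨cm, -, hsubm, -, -, -, -, -⟩ := expand_inv h.1
  obtain ⟨c2, -, hsub2, -, -, hfa, -⟩ := expand_inv hacq
  have hfree : freeIn (r.tr k₂) l := hfa l rfl
  obtain ⟨x, rfl⟩ := hpre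
  have hlabv : ∃ cv, (r.tr k₂).label? v = some cv :=
    label_of_append (x := x) (by rw [GTree.label?_eq_sub?, hsub2]; rfl)
  have hnone : (r.tr k₂).label? (locpos v (m+1)) = none := by
    rcases hcase : (r.tr k₂).label? (locpos v (m+1)) with _ | cx
    · rfl
    · exfalso
      have hmon := label_mono hk hcase
      rw [locpos_succ, GTree.label?_eq_sub?, GTree.sub?_append, hsubm] at hmon
      simp [GTree.sub?] at hmon
  refine not_free v hlabv ?_ hfree
  intro j c' hleaf
  rw [← locpos_def] at hleaf
  have hin : InTree r (locpos v j) c' := ⟨k₂, by rw [GTree.label?_eq_sub?, hleaf]; rfl⟩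
  have hjm : j ≤ m := by
    by_contra hgt
    have hjeq : locpos v j = locpos v (m+1) ++ List.replicate (j-(m+1)) true := by
      rw [← locpos_add]
      congr 1
      omega
    obtain ⟨cc, hcc⟩ := label_of_append (p := locpos v (m+1))
      (x := List.replicate (j-(m+1)) true)
      (by rw [← hjeq, GTree.label?_eq_sub?, hleaf]; rfl)
    rw [hcc] at hnone
    exact absurd hnone (by simp)
  exact initrel_holds h j hjm c' hin

/-- Initial releases of a given lock in the subtree are unique in time. -/
lemma initrel_time_eq {k m k' m' : ℕ} {l : L}
    (h : InitRelAt r v k m l) (h' : InitRelAt r v k' m' l) : k = k' := by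
  have key : ∀ {k₁ m₁ k₁' m₁'}, InitRelAt r v k₁ m₁ l → InitRelAt r v k₁' m₁' l →
      m₁ < m₁' → False := by
    intro k₁ m₁ k₁' m₁' h1 h1' hm
    obtain ⟨cm, c1, hsubm, hsub1, hact, -, -, -⟩ := expand_inv h1.1
    have hin1 : InTree r (locpos v (m₁+1)) c1 :=
      ⟨k₁+1, by rw [locpos_succ, GTree.label?_eq_sub?, hsub1]; rfl⟩
    have hl1 : l ∈ c1.2.2 := initrel_holds h1' (m₁+1) (by omega) c1 hin1
    rw [hact] at hl1
    exact hl1.2 rfl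
  have hmm : m = m' := by
    rcases lt_trichotomy m m' with h1 | h1 | h1
    · exact (key h h' h1).elim
    · exact h1
    · exact (key h' h h1).elim
  subst hmm
  exact event_time_unique h.1 h'.1

/-- Any usage of `l` in the subtree happens strictly after its initial release. -/
lemma usage_after_initrel {q₂ : List Bool} {k m k₂ m₂ : ℕ} {l : L}
    (h : InitRelAt r v k m l) (hq₂ : LocalStartIn v q₂)
    (hu : UsageAt r q₂ k₂ m₂ l) : k < k₂ := by
  rcases hu with ⟨hev, -⟩ | ⟨hev, hni⟩
  · by_contra hle
    exact initrel_no_acq_le h hev (localstart_prefix_locpos hq₂ m₂) (by omega)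
  · have hex : ∃ m' < m₂, EventAtPos r (locpos q₂ m') (Act.acq l) := by
      by_contra hno
      push_neg at hno
      exact hni ⟨hev, hno⟩
    obtain ⟨m', hm', k₃, hk₃⟩ := hex
    have h1 : k₃ < k₂ := event_step_lt hk₃ hev hm'
    by_contra hle
    exact initrel_no_acq_le h hk₃ (localstart_prefix_locpos hq₂ m') (by omega)

/-- After a final acquisition the lock is held all along the local run. -/
lemma finacq_holds {q : List Bool} {k m : ℕ} {b : L} (h : FinAcqAt r q k m b) :
    ∀ j, m + 1 ≤ j → ∀ c, InTree r (locpos q j) c → b ∈ c.2.2 := by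
  obtain ⟨cm, c1, hsubm, hsub1, hact, -, -, -⟩ := expand_inv h.1
  have hin1 : InTree r (locpos q (m+1)) c1 :=
    ⟨k+1, by rw [locpos_succ, GTree.label?_eq_sub?, hsub1]; rfl⟩
  have hb1 : b ∈ c1.2.2 := by rw [hact]; exact Or.inr rfl
  intro j hj c hc
  exact run_keep hin1 hb1 (fun j' hj' hlt k' hk' => h.2 j' (by omega) ⟨k', hk'⟩) j hj le_rfl c hc

/-- No acquisition of `b` anywhere strictly after a final acquisition of `b`. -/
lemma finacq_no_acq_after {q : List Bool} {k m k₂ : ℕ} {b : L} {pos₂ : List Bool}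
    (h : FinAcqAt r q k m b) (hacq : EventAt r k₂ pos₂ (Act.acq b)) (hk : k < k₂) : False := by
  obtain ⟨cm, c1, hsubm, hsub1, hact, -, -, -⟩ := expand_inv h.1
  obtain ⟨c2, -, hsub2, -, -, hfa, -⟩ := expand_inv hacq
  have hfree : freeIn (r.tr k₂) b := hfa b rfl
  have hlab1 : (r.tr k₂).label? (locpos q (m+1)) = some c1 :=
    label_mono (by omega : k+1 ≤ k₂)
      (by rw [locpos_succ, GTree.label?_eq_sub?, hsub1]; rfl)
  refine not_free (locpos q (m+1)) ⟨c1, hlab1⟩ ?_ hfree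
  intro j c' hleaf
  rw [← locpos_add] at hleaf
  have hin : InTree r (locpos q (m+1+j)) c' := ⟨k₂, by rw [GTree.label?_eq_sub?, hleaf]; rfl⟩
  exact finacq_holds h (m+1+j) (by omega) c' hin

/-- No release of `b` in the subtree strictly after a final acquisition of `b`. -/
lemma finacq_no_rel_after {q q₂ : List Bool} {k m k₂ m₂ : ℕ} {b : L}
    (hq : LocalStartIn v q) (hq₂ : LocalStartIn v q₂)
    (h : FinAcqAt r q k m b) (hrel : EventAt r k₂ (locpos q₂ m₂) (Act.rel b))
    (hk : k < k₂) : False := by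
  obtain ⟨cm, c1, hsubm, hsub1, hact, -, -, -⟩ := expand_inv h.1
  obtain ⟨c2, -, hsub2, -, -, -, hrel2, -⟩ := expand_inv hrel
  have hb2 : b ∈ c2.2.2 := hrel2 b rfl
  have hlab1 : (r.tr k₂).label? (locpos q (m+1)) = some c1 :=
    label_mono (by omega : k+1 ≤ k₂)
      (by rw [locpos_succ, GTree.label?_eq_sub?, hsub1]; rfl)
  rw [GTree.label?_eq_sub?] at hlab1
  rcases hsp : (r.tr k₂).sub? (locpos q (m+1)) with _ | t₀
  · rw [hsp] at hlab1
    exact absurd hlab1 (by simp)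
  · obtain ⟨j, c', hj⟩ := GTree.exists_true_leaf t₀
    have hleaf : (r.tr k₂).sub? (locpos q (m+1+j)) = some (.leaf c') := by
      rw [locpos_add, GTree.sub?_append, hsp]
      exact hj
    have hb' : b ∈ c'.2.2 := finacq_holds h (m+1+j) (by omega) c'
      ⟨k₂, by rw [GTree.label?_eq_sub?, hleaf]; rfl⟩
    by_cases hpp : locpos q (m+1+j) = locpos q₂ m₂
    · obtain ⟨hqq, hmeq⟩ := locpos_inj hq hq₂ hpp
      refine h.2 m₂ (by omega) ⟨k₂, ?_⟩
      rw [hqq]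
      exact hrel
    · have := two_le_cnt hleaf hsub2 hpp hb' hb2
      have hle := cnt_le_one (r := r) k₂ b
      omega

/-- Final acquisitions of a given lock in the subtree are unique in time. -/
lemma finacq_time_eq {q q' : List Bool} {k m k' m' : ℕ} {b : L}
    (h : FinAcqAt r q k m b) (h' : FinAcqAt r q' k' m' b) : k = k' := by
  rcases lt_trichotomy k k' with h1 | h1 | h1
  · exact (finacq_no_acq_after h h'.1 h1).elim
  · exact h1
  · exact (finacq_no_acq_after h' h.1 h1).elim

/-- Any usage of `b` in the subtree happens strictly before its final acquisition. -/
lemma usage_before_finacq {q_b q₂ : List Bool} {k_b m_b k₂ m₂ : ℕ} {b : L}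
    (hqb : LocalStartIn v q_b) (hq₂ : LocalStartIn v q₂)
    (hfb : FinAcqAt r q_b k_b m_b b) (hu : UsageAt r q₂ k₂ m₂ b) : k₂ < k_b := by
  rcases hu with ⟨hev, hnf⟩ | ⟨hev, -⟩
  · rcases lt_trichotomy k₂ k_b with h1 | h1 | h1
    · exact h1
    · exfalso
      subst h1
      have hpp := expand_pos_unique hev hfb.1
      obtain ⟨hqq, hmm⟩ := locpos_inj hq₂ hqb hpp
      subst hqq
      exact hnf (hmm ▸ hfb)
    · exact (finacq_no_acq_after hfb hev h1).elim
  · rcases lt_trichotomy k₂ k_b with h1 | h1 | h1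
    · exact h1
    · exfalso
      subst h1
      have hpp := expand_pos_unique hev hfb.1
      obtain ⟨c, cr, hsub, hsubr, hactr, -⟩ := expand_inv hev
      obtain ⟨c', ca, hsub', hsuba, hacta, -⟩ := expand_inv hfb.1
      rw [hpp] at hsub hsubr
      have hc : c = c' := by
        have := hsub.symm.trans hsub'
        exact GTree.leaf.inj (Option.some.inj this)
      have hcr : cr = ca := by
        have := hsubr.symm.trans hsuba
        exact GTree.leaf.inj (Option.some.inj this)
      have hmem : b ∈ ca.2.2 := by rw [hacta]; exact Or.inr rfl
      have hnmem : b ∉ cr.2.2 := by rw [hactr]; exact fun hh => hh.2 rfl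
      exact hnmem (hcr ▸ hmem)
    · exact (finacq_no_rel_after hqb hq₂ hfb hev h1).elim

/-- A lock held at `v` and never initially released is never acquired below `v`. -/
lemma X_no_acq {l : L} {c : Conf P Γ L} (hc : InTree r v c) (hl : l ∈ c.2.2)
    (hR : l ∉ (acqStructOf r v).R) :
    ∀ pos₂ k₂, v <+: pos₂ → ¬ EventAt r k₂ pos₂ (Act.acq l) := by
  have hnorel : ∀ j k', ¬ EventAt r k' (locpos v j) (Act.rel l) := by
    by_contra hex
    push_neg at hex
    obtain ⟨j, k', hev⟩ := hex
    have hexists : ∃ j, ∃ k', EventAt r k' (locpos v j) (Act.rel l) := ⟨j, k', hev⟩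
    obtain ⟨k0, hev0⟩ := Nat.find_spec hexists
    have hmin : ∀ i, i < Nat.find hexists → ∀ k'', ¬ EventAt r k'' (locpos v i) (Act.rel l) := by
      intro i hi k'' hk''
      exact Nat.find_min hexists hi ⟨k'', hk''⟩
    have hhold : ∀ i, i ≤ Nat.find hexists → ∀ ci, InTree r (locpos v i) ci → l ∈ ci.2.2 :=
      fun i hi => run_keep (by rw [locpos_zero]; exact hc) hl
        (fun i' _ hlt k'' => hmin i' hlt k'') i (Nat.zero_le i) hi
    have hnoacq : ∀ m', m' < Nat.find hexists → ¬ EventAtPos r (locpos v m') (Act.acq l) := by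
      rintro m' hm' ⟨t, hacq⟩
      obtain ⟨ci, -, hsubi, -, -, hfa, -⟩ := expand_inv hacq
      have hfree : freeIn (r.tr t) l := hfa l rfl
      have hini : InTree r (locpos v m') ci := ⟨t, by rw [GTree.label?_eq_sub?, hsubi]; rfl⟩
      have hli : l ∈ ci.2.2 := hhold m' (by omega) ci hini
      exact hfree ci (GTree.mem_leaves_of_sub? hsubi) hli
    exact hR ⟨v, k0, Nat.find hexists, Or.inl rfl, hev0, hnoacq⟩
  have hall : ∀ j c', InTree r (locpos v j) c' → l ∈ c'.2.2 := by
    intro j c' hc'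
    exact run_keep (by rw [locpos_zero]; exact hc) hl
      (fun i _ _ k'' => hnorel i k'') j (Nat.zero_le j) le_rfl c' hc'
  intro pos₂ k₂ hpre hacq
  obtain ⟨c2, -, hsub2, -, -, hfa, -⟩ := expand_inv hacq
  have hfree : freeIn (r.tr k₂) l := hfa l rfl
  obtain ⟨x, rfl⟩ := hpre
  have hlabv : ∃ cv, (r.tr k₂).label? v = some cv :=
    label_of_append (x := x) (by rw [GTree.label?_eq_sub?, hsub2]; rfl)
  refine not_free v hlabv ?_ hfree
  intro j c' hleaf
  rw [← locpos_def] at hleaf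
  exact hall j c' ⟨k₂, by rw [GTree.label?_eq_sub?, hleaf]; rfl⟩

/-! #### Acyclicity of the release and acquisition graphs -/

/-- `l` has an initial release at time `k` somewhere in the subtree at `v`. -/
def IRv (r : GlobalRun M c₀) (v : List Bool) (l : L) (k : ℕ) : Prop :=
  ∃ q m, LocalStartIn v q ∧ InitRelAt r q k m l

/-- `l` has a final acquisition at time `k` somewhere in the subtree at `v`. -/
def FAv (r : GlobalRun M c₀) (v : List Bool) (l : L) (k : ℕ) : Prop :=
  ∃ q m, LocalStartIn v q ∧ FinAcqAt r q k m l

lemma IRv_unique {l : L} {k k' : ℕ} (h : IRv r v l k) (h' : IRv r v l k') : k = k' := by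
  obtain ⟨q, m, hq, hir⟩ := h
  obtain ⟨q', m', hq', hir'⟩ := h'
  have e1 := initrel_q_eq hq hir
  have e2 := initrel_q_eq hq' hir'
  subst e1; subst e2
  exact initrel_time_eq hir hir'

lemma FAv_unique {l : L} {k k' : ℕ} (h : FAv r v l k) (h' : FAv r v l k') : k = k' := by
  obtain ⟨q, m, hq, hfa⟩ := h
  obtain ⟨q', m', hq', hfa'⟩ := h'
  exact finacq_time_eq hfa hfa'

lemma RH_edge {a b : L} {ka kb : ℕ} (hE : (a, b) ∈ (acqStructOf r v).RH)
    (hA : IRv r v a ka) (hB : IRv r v b kb) : ka < kb := by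
  obtain ⟨q, k, m, hq, hib, q₂, k₂, m₂, hq₂, hlt, hus⟩ := hE
  have hkb : k = kb := IRv_unique ⟨q, m, hq, hib⟩ hB
  obtain ⟨qa, ma, hqa, hia⟩ := hA
  have hqv := initrel_q_eq hqa hia
  subst hqv
  have h1 : ka < k₂ := usage_after_initrel hia hq₂ hus
  omega

lemma RH_target {a b : L} (hE : (a, b) ∈ (acqStructOf r v).RH) : ∃ k, IRv r v b k := by
  obtain ⟨q, k, m, hq, hib, -⟩ := hE
  exact ⟨k, q, m, hq, hib⟩

lemma RH_acyclic : RelAcyclic (acqStructOf r v).RH := by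
  intro l hcyc
  have htar : ∀ x y : L,
      Relation.TransGen (fun x y => (x, y) ∈ (acqStructOf r v).RH) x y → ∃ k, IRv r v y k := by
    intro x y h
    induction h with
    | single h => exact RH_target h
    | tail _ h _ => exact RH_target h
  have hmain : ∀ x y : L,
      Relation.TransGen (fun x y => (x, y) ∈ (acqStructOf r v).RH) x y →
      ∀ kx ky, IRv r v x kx → IRv r v y ky → kx < ky := by
    intro x y h
    induction h with
    | single h => exact fun kx ky hx hy => RH_edge h hx hy
    | tail hxz hzy ih =>
      intro kx ky hx hy
      obtain ⟨kz, hz⟩ := htar _ _ hxz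
      exact lt_trans (ih kx kz hx hz) (RH_edge hzy hz hy)
  obtain ⟨kl, hl⟩ := htar _ _ hcyc
  exact lt_irrefl kl (hmain _ _ hcyc kl kl hl hl)

lemma AH_edge {a b : L} {ka kb : ℕ} (hE : (a, b) ∈ (acqStructOf r v).AH)
    (hA : FAv r v a ka) (hB : FAv r v b kb) : ka < kb := by
  obtain ⟨q, k, m, hq, hfa, q₂, k₂, m₂, hq₂, hlt, hus⟩ := hE
  have hka : k = ka := FAv_unique ⟨q, m, hq, hfa⟩ hA
  obtain ⟨qb, mb, hqb, hfb⟩ := hB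
  have h2 : k₂ < kb := usage_before_finacq hqb hq₂ hfb hus
  omega

lemma AH_source {a b : L} (hE : (a, b) ∈ (acqStructOf r v).AH) : ∃ k, FAv r v a k := by
  obtain ⟨q, k, m, hq, hfa, -⟩ := hE
  exact ⟨k, q, m, hq, hfa⟩

lemma AH_acyclic : RelAcyclic (acqStructOf r v).AH := by
  intro l hcyc
  have hsrc : ∀ x y : L,
      Relation.TransGen (fun x y => (x, y) ∈ (acqStructOf r v).AH) x y → ∃ k, FAv r v x k := by
    intro x y h
    induction h with
    | single h => exact AH_source h
    | tail _ _ ih => exact ih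
  have hmain : ∀ x y : L,
      Relation.TransGen (fun x y => (x, y) ∈ (acqStructOf r v).AH) x y →
      ∀ kx ky, FAv r v x kx → FAv r v y ky → kx < ky := by
    intro x y h
    induction h with
    | single h => exact fun kx ky hx hy => AH_edge h hx hy
    | tail hxz hzy ih =>
      intro kx ky hx hy
      obtain ⟨kz, hz⟩ := AH_source hzy
      exact lt_trans (ih kx kz hx hz) (AH_edge hzy hz hy)
  obtain ⟨kl, hl⟩ := hsrc _ _ hcyc
  exact lt_irrefl kl (hmain _ _ hcyc kl kl hl hl)

lemma X_cond : ((acqStructOf r v).X \ (acqStructOf r v).R) ∩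
    ((acqStructOf r v).U ∪ (acqStructOf r v).A) = ∅ := by
  rw [Set.eq_empty_iff_forall_notMem]
  rintro l ⟨⟨hX, hR⟩, hUA⟩
  obtain ⟨c, hc, hl⟩ := hX
  have hno := X_no_acq hc hl hR
  rcases hUA with hU | hA
  · obtain ⟨q, k, m, hq, hus⟩ := hU
    rcases hus with ⟨hev, -⟩ | ⟨hev, hni⟩
    · exact hno _ _ (localstart_prefix_locpos hq m) hev
    · have hex : ∃ m' < m, EventAtPos r (locpos q m') (Act.acq l) := by
        by_contra hcon
        push_neg at hcon
        exact hni ⟨hev, hcon⟩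
      obtain ⟨m', -, k₃, hk₃⟩ := hex
      exact hno _ _ (localstart_prefix_locpos hq m') hk₃
  · obtain ⟨q, k, m, hq, hfa⟩ := hA
    exact hno _ _ (localstart_prefix_locpos hq m) hfa.1

end Aux

/-- **Consistency of acquisition structures of subtrees (Statement 11).**
For every global run `T` of an L-DPN that uses locks in a nested style and every
node `v` of `T`, the acquisition structure of the subtree of `T` rooted at `v`
is consistent: its release and acquisition graphs are acyclic and
`(X∖R) ∩ (U∪A) = ∅`. -/
theorem subtree_acquisition_structure_consistent :
    ∀ (n : ℕ) (P Γ L : Type) (M : LDPN n P Γ L), M.WF →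
    ∀ (c₀ : Conf P Γ L) (r : GlobalRun M c₀), NestedRun r →
    ∀ v : List Bool, (∃ c, InTree r v c) →
      ASConsistent (acqStructOf r v) := by
  intro n P Γ L M _hWF c₀ r _hnested v _hv
  exact ⟨RH_acyclic, AH_acyclic, X_cond⟩

end DPNFormal
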